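/- The Horn matrix H cannot be written as P + N with P positive semidefinite and N entrywise nonnegative. -/

import Mathlib

open Matrix

/-- The Horn matrix. -/
def hornMatrix : Matrix (Fin 5) (Fin 5) ℝ :=
  !![1, 1, -1, -1, 1;
     1, 1, 1, -1, -1;
     -1, 1, 1, 1, -1;
     -1, -1, 1, 1, 1;
     1, -1, -1, 1, 1]

lemma horn_aux {P N : Matrix (Fin 5) (Fin 5) ℝ} (hP : P.PosSemidef)
    (hN : ∀ i j, 0 ≤ N i j) (hH : hornMatrix = P + N)
    (x : Fin 5 → ℝ) (hx : x ⬝ᵥ hornMatrix *ᵥ x = 0) (hxN : 0 ≤ x ⬝ᵥ N *ᵥ x) :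
    P *ᵥ x = 0 := by
  have h1 : x ⬝ᵥ P *ᵥ x = 0 := by
    have h2 : x ⬝ᵥ hornMatrix *ᵥ x = x ⬝ᵥ P *ᵥ x + x ⬝ᵥ N *ᵥ x := by
      rw [hH, add_mulVec, dotProduct_add]
    have h3 := hP.dotProduct_mulVec_nonneg x
    simp only [star_trivial, RCLike.re_to_real] at h3
    linarith [hx, h2, h3, hxN]
  have := (hP.dotProduct_mulVec_zero_iff x).mp (by simpa using h1)
  exact this

/-- The Horn matrix cannot be written as `P + N` with `P` positive semidefinite and
`N` entrywise nonnegative. -/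
theorem hornMatrix_not_spn :
    ¬ ∃ (P N : Matrix (Fin 5) (Fin 5) ℝ),
      P.PosSemidef ∧ N.IsSymm ∧ (∀ i j, 0 ≤ N i j) ∧ hornMatrix = P + N := by
  rintro ⟨P, N, hP, hNs, hN, hH⟩
  have xN : ∀ x : Fin 5 → ℝ, (∀ i, 0 ≤ x i) → 0 ≤ x ⬝ᵥ N *ᵥ x := by
    intro x hx
    simp only [dotProduct, mulVec]
    apply Finset.sum_nonneg
    intro i _
    apply mul_nonneg (hx i)
    apply Finset.sum_nonneg
    intro j _
    exact mul_nonneg (hN i j) (hx j)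
  have k0 := horn_aux hP hN hH ![1,0,1,0,0]
    (by simp [hornMatrix, dotProduct, mulVec, Fin.sum_univ_five, Matrix.vecHead, Matrix.vecTail])
    (xN _ (by intro i; fin_cases i <;> norm_num))
  have k1 := horn_aux hP hN hH ![0,1,0,1,0]
    (by simp [hornMatrix, dotProduct, mulVec, Fin.sum_univ_five, Matrix.vecHead, Matrix.vecTail])
    (xN _ (by intro i; fin_cases i <;> norm_num))
  have k2 := horn_aux hP hN hH ![0,0,1,0,1]
    (by simp [hornMatrix, dotProduct, mulVec, Fin.sum_univ_five, Matrix.vecHead, Matrix.vecTail])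
    (xN _ (by intro i; fin_cases i <;> norm_num))
  have k3 := horn_aux hP hN hH ![1,0,0,1,0]
    (by simp [hornMatrix, dotProduct, mulVec, Fin.sum_univ_five, Matrix.vecHead, Matrix.vecTail])
    (xN _ (by intro i; fin_cases i <;> norm_num))
  have k4 := horn_aux hP hN hH ![0,1,0,0,1]
    (by simp [hornMatrix, dotProduct, mulVec, Fin.sum_univ_five, Matrix.vecHead, Matrix.vecTail])
    (xN _ (by intro i; fin_cases i <;> norm_num))
  have e0 := congrFun k0 0
  have e1 := congrFun k1 0
  have e2 := congrFun k2 0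
  have e3 := congrFun k3 0
  have e4 := congrFun k4 0
  simp only [mulVec, dotProduct, Fin.sum_univ_five] at e0 e1 e2 e3 e4
  norm_num [Matrix.cons_val_zero, Matrix.cons_val_one, Matrix.cons_val_two, Matrix.cons_val_three, Matrix.cons_val_four, Matrix.vecHead, Matrix.vecTail] at e0 e1 e2 e3 e4
  have hP02 : P 0 2 = 0 := by linarith
  have := congrFun (congrFun hH 0) 2
  have hHval : hornMatrix 0 2 = -1 := by norm_num [hornMatrix, Matrix.cons_val_two, Matrix.cons_val_three, Matrix.cons_val_four, Matrix.vecHead, Matrix.vecTail]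
  rw [hHval] at this
  simp only [Matrix.add_apply] at this
  have := hN 0 2
  linarith
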